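/- Let G be a finite solvable group, N an abelian normal subgroup of G, a ∈ G, C = C_G(a), and C_N = {g ∈ G : [a,g] ∈ N}. Then dl(C_N / core_{C_N}(C)) ≤ dl(C_N / (C_N ∩ C_G(N))) + 1. -/

import Mathlib

/-- The centralizer of a normal subgroup is normal. -/
instance centralizer_normal_of_normal {G : Type*} [Group G] (N : Subgroup G) [hN : N.Normal] :
    (Subgroup.centralizer (N : Set G)).Normal := by
  constructor
  intro c hc g
  rw [Subgroup.mem_centralizer_iff] at hc ⊢
  intro h hh
  have hh' : g⁻¹ * h * g ∈ (N : Set G) := hN.conj_mem' h hh g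
  have key := hc _ hh'
  calc h * (g * c * g⁻¹) = g * (g⁻¹ * h * g * c) * g⁻¹ := by group
    _ = g * (c * (g⁻¹ * h * g)) * g⁻¹ := by rw [key]
    _ = g * c * g⁻¹ * h := by group

open scoped commutatorElement

/-- Key elementwise lemma: if `g, h` both centralize the abelian subgroup `N` and
`[a,g], [a,h] ∈ N`, then `⁅g,h⁆` commutes with `a`. -/
theorem comm_of_centralizes {G : Type*} [Group G] (N : Subgroup G)
    (habelian : ∀ x ∈ N, ∀ y ∈ N, x * y = y * x) (a g h : G)
    (hg : a⁻¹ * g⁻¹ * a * g ∈ N) (hh : a⁻¹ * h⁻¹ * a * h ∈ N)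
    (hgc : g ∈ Subgroup.centralizer (N : Set G))
    (hhc : h ∈ Subgroup.centralizer (N : Set G)) :
    a * ⁅g, h⁆ = ⁅g, h⁆ * a := by
  rw [Subgroup.mem_centralizer_iff] at hgc hhc
  set u := a⁻¹ * g⁻¹ * a * g with hu
  set v := a⁻¹ * h⁻¹ * a * h with hv
  have hgu : u * g = g * u := hgc u hg
  have hhu : u * h = h * u := hhc u hg
  have hgv : v * g = g * v := hgc v hh
  have huv : u * v = v * u := habelian u hg v hh
  have e1 : g⁻¹ * a * g = a * u := by rw [hu]; group
  have e2 : h⁻¹ * a * h = a * v := by rw [hv]; group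
  have key : h⁻¹ * g⁻¹ * a * g * h = g⁻¹ * h⁻¹ * a * h * g := by
    calc h⁻¹ * g⁻¹ * a * g * h = h⁻¹ * (g⁻¹ * a * g) * h := by group
      _ = h⁻¹ * (a * u) * h := by rw [e1]
      _ = h⁻¹ * a * (u * h) := by group
      _ = h⁻¹ * a * (h * u) := by rw [hhu]
      _ = (h⁻¹ * a * h) * u := by group
      _ = (a * v) * u := by rw [e2]
      _ = a * (v * u) := by group
      _ = a * (u * v) := by rw [huv]
      _ = (a * u) * v := by group
      _ = (g⁻¹ * a * g) * v := by rw [e1]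
      _ = g⁻¹ * a * (g * v) := by group
      _ = g⁻¹ * a * (v * g) := by rw [← hgv]
      _ = g⁻¹ * (a * v) * g := by group
      _ = g⁻¹ * (h⁻¹ * a * h) * g := by rw [e2]
      _ = g⁻¹ * h⁻¹ * a * h * g := by group
  rw [commutatorElement_def]
  calc a * (g * h * g⁻¹ * h⁻¹)
      = (g * h) * (h⁻¹ * g⁻¹ * a * g * h) * (g⁻¹ * h⁻¹) := by group
    _ = (g * h) * (g⁻¹ * h⁻¹ * a * h * g) * (g⁻¹ * h⁻¹) := by rw [key]
    _ = g * h * g⁻¹ * h⁻¹ * a := by group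

theorem stmt6 {G : Type*} [Group G] [Fintype G] (hG : IsSolvable G)
    (N : Subgroup G) [N.Normal] (habelian : ∀ x ∈ N, ∀ y ∈ N, x * y = y * x) (a : G)
    (CN : Subgroup G) (hCN : ∀ g : G, g ∈ CN ↔ a⁻¹ * g⁻¹ * a * g ∈ N) (n : ℕ)
    (h : derivedSeries (↥CN ⧸ (Subgroup.centralizer (N : Set G)).subgroupOf CN) n = ⊥) :
    derivedSeries (↥CN ⧸ ((Subgroup.centralizer {a}).subgroupOf CN).normalCore) (n + 1) = ⊥ := by
  set K : Subgroup CN := (Subgroup.centralizer (N : Set G)).subgroupOf CN with hK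
  set M : Subgroup CN := ((Subgroup.centralizer {a}).subgroupOf CN).normalCore with hM
  -- derivedSeries CN n ≤ K
  have hDK : derivedSeries (↥CN) n ≤ K := by
    have h1 : (derivedSeries (↥CN) n).map (QuotientGroup.mk' K) ≤
        derivedSeries (↥CN ⧸ K) n := map_derivedSeries_le_derivedSeries _ n
    rw [h] at h1
    intro x hx
    have : (QuotientGroup.mk' K) x ∈ (⊥ : Subgroup (↥CN ⧸ K)) :=
      h1 ⟨x, hx, rfl⟩
    rw [Subgroup.mem_bot] at this
    rwa [← QuotientGroup.ker_mk' K, MonoidHom.mem_ker]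
  -- ⁅K, K⁆ ≤ centralizer {a} pulled back
  have hKK : ⁅K, K⁆ ≤ (Subgroup.centralizer {a}).subgroupOf CN := by
    rw [Subgroup.commutator_le]
    intro g hg h' hh'
    rw [Subgroup.mem_subgroupOf] at hg hh' ⊢
    rw [Subgroup.mem_centralizer_iff]
    intro x hx
    rw [Set.mem_singleton_iff] at hx
    rw [hx]
    have := comm_of_centralizes N habelian a (g : G) (h' : G)
      ((hCN g).mp g.2) ((hCN h').mp h'.2) hg hh'
    simpa [commutatorElement_def] using this
  -- ⁅K, K⁆ is normal in CN, hence ≤ M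
  have hKnormal : K.Normal := Subgroup.normal_subgroupOf
  have hKKnormal : (⁅K, K⁆ : Subgroup CN).Normal :=
    @Subgroup.commutator_normal _ _ K K hKnormal hKnormal
  have hKKM : ⁅K, K⁆ ≤ M :=
    (@Subgroup.normal_le_normalCore _ _ _ _ hKKnormal).mpr hKK
  -- derivedSeries CN (n+1) ≤ M
  have hDM : derivedSeries (↥CN) (n + 1) ≤ M := by
    rw [derivedSeries_succ]
    exact le_trans (Subgroup.commutator_mono hDK hDK) hKKM
  -- conclude
  have hsurj : Function.Surjective (QuotientGroup.mk' M) := QuotientGroup.mk'_surjective M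
  have h2 := derivedSeries_le_map_derivedSeries hsurj (n + 1)
  rw [eq_bot_iff]
  refine le_trans h2 ?_
  refine le_trans (Subgroup.map_mono hDM) ?_
  rw [Subgroup.map_le_iff_le_comap]
  intro x hx
  simp only [Subgroup.mem_comap, QuotientGroup.mk'_apply, Subgroup.mem_bot]
  rw [QuotientGroup.eq_one_iff]
  exact hx
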